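/- Let G be a finite non-trivial Cpo-group. Then either |G| is a prime number, or there exist distinct primes p and q with p > q and q dividing p − 1 such that |G| = pq and the commutator subgroup G' of G has order p. -/

import Mathlib

/-- A group `G` is a Cpo-group if the centralizer of every non-trivial element
has prime order. -/
def IsCpoGroup (G : Type*) [Group G] : Prop :=
  ∀ x : G, x ≠ 1 → (Nat.card (Subgroup.centralizer ({x} : Set G))).Prime

open Subgroup

section Aux

/-- `MulAut` of `Multiplicative A` is isomorphic to `AddAut A`. -/
def mulAutMultiplicative (A : Type*) [AddGroup A] :
    MulAut (Multiplicative A) ≃* Multiplicative (AddAut A) :=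
  MulAutMultiplicative A

/-- The automorphism group of a group of prime order is cyclic. -/
lemma isCyclic_mulAut_of_prime_card {P : Type*} [Group P] [Finite P] {p : ℕ} [Fact p.Prime]
    (h : Nat.card P = p) : IsCyclic (MulAut P) := by
  have hcyc : IsCyclic P := isCyclic_of_prime_card h
  haveI : NeZero (Nat.card P) := ⟨Nat.card_pos.ne'⟩
  haveI : Fact (Nat.card P).Prime := ⟨h ▸ (Fact.out : p.Prime)⟩
  have e : MulAut P ≃* (ZMod (Nat.card P))ˣ :=
    (MulAut.congr (zmodCyclicMulEquiv hcyc)).symm.trans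
      ((mulAutMultiplicative (ZMod (Nat.card P))).trans
          (AddEquiv.toMultiplicative (ZMod.AddAutEquivUnits _)))
  exact isCyclic_of_surjective e.symm.toMonoidHom e.symm.surjective

variable {G : Type*} [Group G] [Finite G]

/-- In a Cpo-group, every non-trivial element has prime order and generates
its own centralizer. -/
lemma cpo_zpowers (hG : IsCpoGroup G) {x : G} (hx : x ≠ 1) :
    (orderOf x).Prime ∧ zpowers x = centralizer ({x} : Set G) := by
  have hprime := hG x hx
  have hle : zpowers x ≤ centralizer ({x} : Set G) := by
    rw [zpowers_le]
    exact mem_centralizer_iff.mpr fun h hh => by rw [Set.mem_singleton_iff.mp hh]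
  have hdvd : orderOf x ∣ Nat.card (centralizer ({x} : Set G)) :=
    Nat.card_zpowers x ▸ card_dvd_of_le hle
  have hord : orderOf x = Nat.card (centralizer ({x} : Set G)) :=
    ((Nat.Prime.eq_one_or_self_of_dvd hprime _ hdvd).resolve_left
      (by simpa using hx)).symm ▸ rfl
  refine ⟨hord ▸ hprime, ?_⟩
  exact eq_of_le_of_card_ge hle (le_of_eq (by rw [Nat.card_zpowers, hord]))

/-- If a Cpo-group has a non-trivial central element, its order is prime. -/
lemma cpo_card_prime_of_center (hG : IsCpoGroup G) {z : G} (hz : z ≠ 1)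
    (hzc : z ∈ Subgroup.center G) : (Nat.card G).Prime := by
  have htop : centralizer ({z} : Set G) = ⊤ := by
    refine top_le_iff.mp fun g _ => mem_centralizer_iff.mpr fun h hh => ?_
    rw [Set.mem_singleton_iff.mp hh]
    exact ((Subgroup.mem_center_iff.mp hzc) g).symm
  have := hG z hz
  rwa [htop, Subgroup.card_top] at this

/-- Subgroups of Cpo-groups are Cpo-groups. -/
lemma cpo_subgroup (hG : IsCpoGroup G) (K : Subgroup G) : IsCpoGroup K := by
  intro y hy
  have hy' : (y : G) ≠ 1 := fun h => hy (Subtype.ext h)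
  obtain ⟨-, hzp⟩ := cpo_zpowers hG hy'
  have hle : centralizer ({(y : G)} : Set G) ≤ K := by
    rw [← hzp, zpowers_le]; exact y.2
  have heq : centralizer ({y} : Set K) =
      (centralizer ({(y : G)} : Set G)).subgroupOf K := by
    ext z
    simp only [mem_centralizer_iff, mem_subgroupOf, Set.mem_singleton_iff]
    constructor
    · intro h w hw
      rw [hw]
      exact congrArg Subtype.val (h y rfl)
    · intro h w hw
      rw [hw]
      exact Subtype.ext (h (y : G) rfl)
  rw [heq]
  have : Nat.card ((centralizer ({(y : G)} : Set G)).subgroupOf K) =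
      Nat.card (centralizer ({(y : G)} : Set G)) :=
    Nat.card_congr (Subgroup.subgroupOfEquivOfLe hle).toEquiv
  rw [this]
  exact hG _ hy'

/-- Any Sylow subgroup of a Cpo-group has prime order. -/
lemma cpo_sylow_card (hG : IsCpoGroup G) {q : ℕ} [Fact q.Prime] (hq : q ∣ Nat.card G)
    (S : Sylow q G) : Nat.card (S : Subgroup G) = q := by
  have hqprime : q.Prime := Fact.out
  have hcard : Nat.card (S : Subgroup G) = q ^ (Nat.card G).factorization q :=
    S.card_eq_multiplicity
  have hpos : 0 < (Nat.card G).factorization q :=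
    Nat.Prime.factorization_pos_of_dvd hqprime Nat.card_pos.ne' hq
  have hqdvd : q ∣ Nat.card (S : Subgroup G) := by
    rw [hcard]; exact dvd_pow_self q hpos.ne'
  haveI : Nontrivial (S : Subgroup G) := by
    rw [← Finite.one_lt_card_iff_nontrivial]
    exact lt_of_lt_of_le hqprime.one_lt (Nat.le_of_dvd Nat.card_pos hqdvd)
  haveI := S.isPGroup'.center_nontrivial
  obtain ⟨z, hz⟩ := exists_ne (1 : Subgroup.center (S : Subgroup G))
  have hz1 : ((z : (S : Subgroup G)) : G) ≠ 1 := by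
    intro h
    exact hz (Subtype.ext (Subtype.ext h))
  have hle : (S : Subgroup G) ≤ centralizer {((z : (S : Subgroup G)) : G)} := by
    intro s hs
    refine mem_centralizer_iff.mpr fun h hh => ?_
    rw [Set.mem_singleton_iff.mp hh]
    have := Subgroup.mem_center_iff.mp z.2 ⟨s, hs⟩
    exact congrArg Subtype.val this.symm
  have hdvd : Nat.card (S : Subgroup G) ∣ Nat.card (centralizer {((z : (S : Subgroup G)) : G)}) :=
    card_dvd_of_le hle
  have hr := hG _ hz1
  rcases (Nat.Prime.eq_one_or_self_of_dvd hr _ hdvd) with h1 | h1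
  · exact absurd h1 (Finite.one_lt_card).ne'
  · have : q ∣ Nat.card (centralizer {((z : (S : Subgroup G)) : G)}) := h1 ▸ hqdvd
    rw [h1]
    exact ((Nat.prime_dvd_prime_iff_eq hqprime hr).mp this).symm

/-- A characteristic subgroup of a normal subgroup is normal. -/
lemma map_subtype_normal {G : Type*} [Group G] (K : Subgroup G) [K.Normal]
    (L : Subgroup K) [h : L.Characteristic] : (L.map K.subtype).Normal := by
  constructor
  rintro _ ⟨l, hl, rfl⟩ g
  have hmap := Subgroup.characteristic_iff_map_eq.mp h
    (MulAut.conjNormal g : K ≃* K)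
  have hmem : (MulAut.conjNormal g) l ∈ L := by
    rw [← hmap]; exact ⟨l, hl, rfl⟩
  refine ⟨_, hmem, ?_⟩
  simp [MulAut.conjNormal_apply]

/-- The finishing lemma: a finite Cpo-group with trivial center possessing a normal
subgroup of prime order has order `p * q` and commutator subgroup of order `p`. -/
lemma cpo_final {G : Type*} [Group G] [Finite G] (hG : IsCpoGroup G)
    (hZ : ∀ z : G, z ∈ Subgroup.center G → z = 1) (hnt : Nat.card G ≠ 1)
    (P : Subgroup G) [P.Normal] {p : ℕ} (hp : p.Prime) (hPcard : Nat.card P = p) :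
    ∃ p' q : ℕ, p'.Prime ∧ q.Prime ∧ q < p' ∧ q ∣ p' - 1 ∧
      Nat.card G = p' * q ∧ Nat.card (commutator G) = p' := by
  haveI : Fact p.Prime := ⟨hp⟩
  have h1lt : 1 < Nat.card G :=
    Nat.lt_of_le_of_ne (Nat.one_le_iff_ne_zero.mpr Nat.card_pos.ne') (Ne.symm hnt)
  haveI : Nontrivial G := Finite.one_lt_card_iff_nontrivial.mp h1lt
  -- G is non-abelian
  have hcomm_ne : commutator G ≠ ⊥ := by
    intro h
    obtain ⟨z, hz⟩ := exists_ne (1 : G)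
    apply hz (hZ z _)
    rw [Subgroup.mem_center_iff]
    intro g
    have h' : (⊤ : Subgroup G) ≤ centralizer ((⊤ : Subgroup G) : Set G) :=
      Subgroup.commutator_eq_bot_iff_le_centralizer.mp h
    exact (mem_centralizer_iff.mp (h' (mem_top g)) z (mem_top z)).symm
  -- a generator of P
  haveI hPc : IsCyclic P := isCyclic_of_prime_card hPcard
  obtain ⟨y0, hy0⟩ := hPc.exists_generator
  have hy0ord : orderOf y0 = p := by
    rw [← Nat.card_zpowers, (Subgroup.eq_top_iff' _).mpr hy0, Subgroup.card_top, hPcard]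
  have hy1 : (y0 : G) ≠ 1 := by
    intro h
    exact hp.one_lt.ne' (hy0ord ▸ orderOf_eq_one_iff.mpr (Subtype.ext h))
  have hyP : zpowers (y0 : G) = P := by
    refine le_antisymm (zpowers_le.mpr y0.2) fun z hz => ?_
    obtain ⟨k, hk⟩ := mem_zpowers_iff.mp (hy0 ⟨z, hz⟩)
    refine mem_zpowers_iff.mpr ⟨k, ?_⟩
    have := congrArg Subtype.val hk
    simpa using this
  have hcent : centralizer ({(y0 : G)} : Set G) = P :=
    ((cpo_zpowers hG hy1).2).symm.trans hyP
  have hPcomm : ∀ a ∈ P, ∀ b ∈ P, a * b = b * a := by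
    rw [← hyP]
    intro a ha b hb
    obtain ⟨i, rfl⟩ := mem_zpowers_iff.mp ha
    obtain ⟨j, rfl⟩ := mem_zpowers_iff.mp hb
    exact ((Commute.refl (y0 : G)).zpow_zpow i j).eq
  -- the conjugation homomorphism into `MulAut P`
  set f : G →* MulAut P := MulAut.conjNormal with hf
  have hker : f.ker = P := by
    ext g
    constructor
    · intro hg
      have h1 : f g ⟨(y0 : G), y0.2⟩ = ⟨(y0 : G), y0.2⟩ := by
        rw [MonoidHom.mem_ker.mp hg]; rfl
      have h2 : g * (y0 : G) * g⁻¹ = (y0 : G) := by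
        have := congrArg Subtype.val h1
        simpa [hf, MulAut.conjNormal_apply] using this
      rw [← hcent]
      refine mem_centralizer_iff.mpr fun w hw => ?_
      rw [Set.mem_singleton_iff.mp hw]
      calc (y0 : G) * g = (g * (y0 : G) * g⁻¹) * g := by rw [h2]
        _ = g * (y0 : G) := by group
    · intro hg
      rw [MonoidHom.mem_ker]
      ext h
      have hcm := hPcomm g hg (h : G) h.2
      simp only [hf, MulAut.conjNormal_apply, MulAut.one_apply]
      rw [hcm]
      group
  haveI : Finite (MulAut P) := MulEquiv.finite_left
  have hcardQ : Nat.card (G ⧸ P) ∣ p - 1 := by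
    have h1 : Nat.card (G ⧸ f.ker) = Nat.card f.range :=
      Nat.card_congr (QuotientGroup.quotientKerEquivRange f).toEquiv
    rw [hker] at h1
    rw [h1]
    have h2 : Nat.card f.range ∣ Nat.card (MulAut P) := by
      have := card_dvd_of_le (le_top : f.range ≤ ⊤)
      rwa [Subgroup.card_top] at this
    rwa [IsCyclic.card_mulAut, hPcard, Nat.totient_prime hp] at h2
  have hcycQ : IsCyclic (G ⧸ P) := by
    haveI := isCyclic_mulAut_of_prime_card hPcard
    haveI : IsCyclic f.range := Subgroup.isCyclic _
    have e' : G ⧸ P ≃* f.range :=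
      (QuotientGroup.quotientMulEquivOfEq hker.symm).trans
        (QuotientGroup.quotientKerEquivRange f)
    exact isCyclic_of_surjective e'.symm.toMonoidHom e'.symm.surjective
  set m := Nat.card (G ⧸ P) with hm
  have hGm : Nat.card G = m * p := by
    rw [Subgroup.card_eq_card_quotient_mul_card_subgroup P, hPcard]
  have hm1 : m ≠ 1 := by
    intro h
    rw [h, one_mul] at hGm
    have hc : IsCyclic G := isCyclic_of_prime_card hGm
    apply hcomm_ne
    obtain ⟨g, hg⟩ := hc.exists_generator
    rw [show _root_.commutator G = ⁅(⊤ : Subgroup G), ⊤⁆ from rfl,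
      Subgroup.commutator_eq_bot_iff_le_centralizer]
    intro a _
    refine mem_centralizer_iff.mpr fun b _ => ?_
    obtain ⟨i, rfl⟩ := mem_zpowers_iff.mp (hg a)
    obtain ⟨j, rfl⟩ := mem_zpowers_iff.mp (hg b)
    exact ((Commute.refl g).zpow_zpow j i).eq
  -- m is prime
  obtain ⟨gq, hgq⟩ := hcycQ.exists_generator
  have hordgq : orderOf gq = m := by
    rw [← Nat.card_zpowers, (Subgroup.eq_top_iff' _).mpr hgq, Subgroup.card_top]
  obtain ⟨g, rfl⟩ := QuotientGroup.mk_surjective gq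
  have hg1 : g ≠ 1 := by
    intro h
    apply hm1
    rw [← hordgq, h]
    exact orderOf_one
  have hordg := (cpo_zpowers hG hg1).1
  have hdvd : m ∣ orderOf g := hordgq ▸ orderOf_map_dvd (QuotientGroup.mk' P) g
  have hmprime : m.Prime := by
    rcases Nat.Prime.eq_one_or_self_of_dvd hordg m hdvd with h | h
    · exact absurd h hm1
    · rw [h]; exact hordg
  -- the commutator subgroup
  have hcomm_le : commutator G ≤ P := by
    letI : CommGroup (G ⧸ P) := IsCyclic.commGroup
    have := Abelianization.commutator_subset_ker (QuotientGroup.mk' P)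
    rwa [QuotientGroup.ker_mk'] at this
  have hcomm_card : Nat.card (commutator G) = p := by
    have hdvd' : Nat.card (commutator G) ∣ p := hPcard ▸ card_dvd_of_le hcomm_le
    rcases (Nat.Prime.eq_one_or_self_of_dvd hp _ hdvd') with h | h
    · exact absurd (Subgroup.card_eq_one.mp h) hcomm_ne
    · exact h
  refine ⟨p, m, hp, hmprime, ?_, hcardQ, by rw [hGm, mul_comm], hcomm_card⟩
  have h2p := hp.two_le
  have : m ≤ p - 1 := Nat.le_of_dvd (by omega) hcardQ
  omega

theorem cpo_aux : ∀ (n : ℕ) (G : Type u) [Group G] [Finite G], Nat.card G = n →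
    IsCpoGroup G → Nat.card G ≠ 1 →
    (Nat.card G).Prime ∨
      ∃ p q : ℕ, p.Prime ∧ q.Prime ∧ q < p ∧ q ∣ p - 1 ∧
        Nat.card G = p * q ∧ Nat.card (commutator G) = p := by
  intro n
  induction n using Nat.strong_induction_on with
  | _ n ih =>
  intro G _ _ hn hG hnt
  by_cases hz : ∃ z : G, z ≠ 1 ∧ z ∈ Subgroup.center G
  · exact Or.inl (cpo_card_prime_of_center hG hz.choose_spec.1 hz.choose_spec.2)
  push_neg at hz
  have hZ : ∀ z : G, z ∈ Subgroup.center G → z = 1 := by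
    intro z hzc
    by_contra h
    exact hz z h hzc
  have hqp : (Nat.card G).minFac.Prime := Nat.minFac_prime hnt
  set q := (Nat.card G).minFac with hqdef
  haveI : Fact q.Prime := ⟨hqp⟩
  obtain ⟨S⟩ : Nonempty (Sylow q G) := inferInstance
  have hS : Nat.card (S : Subgroup G) = q := cpo_sylow_card hG (Nat.minFac_dvd _) S
  haveI : IsCyclic (S : Subgroup G) := isCyclic_of_prime_card hS
  haveI : Finite (MulAut (S : Subgroup G)) := MulEquiv.finite_left
  -- the normalizer of S is its centralizer
  have hP : (Subgroup.normalizer ((S : Subgroup G) : Set G)) ≤ centralizer ((S : Subgroup G) : Set G) := by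
    set f := (S : Subgroup G).normalizerMonoidHom with hfdef
    have h1 : Nat.card f.range ∣ q - 1 := by
      have h2 : Nat.card f.range ∣ Nat.card (MulAut (S : Subgroup G)) := by
        have := card_dvd_of_le (le_top : f.range ≤ ⊤)
        rwa [Subgroup.card_top] at this
      rwa [IsCyclic.card_mulAut, hS, Nat.totient_prime hqp] at h2
    have e1 : Nat.card ((Subgroup.normalizer ((S : Subgroup G) : Set G)) ⧸ f.ker) = Nat.card f.range :=
      Nat.card_congr (QuotientGroup.quotientKerEquivRange f).toEquiv
    have h3 : Nat.card f.range ∣ Nat.card G := by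
      have e2 : Nat.card (Subgroup.normalizer ((S : Subgroup G) : Set G)) =
          Nat.card ((Subgroup.normalizer ((S : Subgroup G) : Set G)) ⧸ f.ker) * Nat.card f.ker :=
        Subgroup.card_eq_card_quotient_mul_card_subgroup f.ker
      have hd : Nat.card f.range ∣ Nat.card (Subgroup.normalizer ((S : Subgroup G) : Set G)) :=
        ⟨Nat.card f.ker, by rw [← e1, e2]⟩
      refine hd.trans ?_
      have := card_dvd_of_le (le_top : (Subgroup.normalizer ((S : Subgroup G) : Set G)) ≤ ⊤)
      rwa [Subgroup.card_top] at this
    have h4 : Nat.card f.range = 1 := by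
      by_contra h
      have hpr := Nat.minFac_prime h
      have hd1 := (Nat.minFac_dvd _).trans h1
      have hd2 := (Nat.minFac_dvd _).trans h3
      have hge : q ≤ (Nat.card f.range).minFac := Nat.minFac_le_of_dvd hpr.two_le hd2
      have hle : (Nat.card f.range).minFac ≤ q - 1 :=
        Nat.le_of_dvd (Nat.sub_pos_of_lt hqp.one_lt) hd1
      exact absurd (hge.trans hle) (Nat.not_le.mpr (Nat.sub_lt hqp.pos one_pos))
    have h5 : f.ker = ⊤ := by
      rw [← Subgroup.index_eq_one, Subgroup.index]
      rw [e1, h4]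
    rw [Subgroup.normalizerMonoidHom_ker, Subgroup.subgroupOf_eq_top] at h5
    exact h5
  -- Burnside's normal complement
  haveI : FiniteIndex (S : Subgroup G) := ⟨Subgroup.index_ne_zero_of_finite⟩
  set K := (MonoidHom.ker (MonoidHom.transferSylow S hP)) with hKdef
  have hcomp : IsComplement' K (S : Subgroup G) := MonoidHom.ker_transferSylow_isComplement' S hP
  have hmul : Nat.card K * q = Nat.card G := by
    rw [← hS]
    exact hcomp.card_mul
  have hKcpo := cpo_subgroup hG K
  by_cases hK1 : Nat.card K = 1
  · rw [hK1, one_mul] at hmul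
    exact Or.inl (hmul ▸ hqp)
  · have hKlt : Nat.card K < n := by
      have h0 : 0 < Nat.card K := Nat.card_pos
      have : Nat.card K < Nat.card K * q := (Nat.lt_mul_iff_one_lt_right h0).mpr hqp.one_lt
      rwa [hmul, hn] at this
    rcases ih (Nat.card K) hKlt K rfl hKcpo hK1 with hKp |
      ⟨p', q', hp', hq', hlt', hdvd', hKcard, hKcomm⟩
    · exact Or.inr (cpo_final hG hZ hnt K hKp rfl)
    · set P0 := Subgroup.map K.subtype (commutator K) with hP0def
      haveI : P0.Normal := map_subtype_normal K (commutator K)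
      have hP0card : Nat.card P0 = p' := by
        rw [← hKcomm]
        exact (Nat.card_congr (Subgroup.equivMapOfInjective (commutator K) K.subtype
          K.subtype_injective).toEquiv).symm
      exact Or.inr (cpo_final hG hZ hnt P0 hp' hP0card)

end Aux

theorem stmt_11 (G : Type*) [Group G] [Finite G] (hG : IsCpoGroup G)
    (hnt : Nat.card G ≠ 1) :
    (Nat.card G).Prime ∨
      ∃ p q : ℕ, p.Prime ∧ q.Prime ∧ q < p ∧ q ∣ p - 1 ∧
        Nat.card G = p * q ∧ Nat.card (commutator G) = p := by
  exact cpo_aux (Nat.card G) G rfl hG hnt
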